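/- arXiv:1511.06237 — 3 statements merged into one kernel-verified Lean document; each statement's English description precedes it below -/
import Mathlib

section
/- For every z ∈ ℂ one has Φ(z) = −Im((a/2)z²) + (Im(bz))² / (2 Im c). In particular Φ is a real-valued quadratic form on ℂ ≅ ℝ², and Φ is strictly plurisubharmonic: its Laplacian is the positive constant ΔΦ = |b|²/Im c > 0. -/
/-- Supremum of a concave quadratic over `ℝ`. -/
lemma sup_quad_aux (K m t : ℝ) (ht : 0 < t) :
    (⨆ x : ℝ, K - m * x - t/2 * x ^ 2) = K + m ^ 2 / (2 * t) := by
  have key : ∀ x : ℝ, K - m * x - t/2 * x ^ 2 ≤ K + m ^ 2 / (2 * t) := by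
    intro x
    have h : K + m ^ 2 / (2 * t) - (K - m * x - t/2 * x ^ 2) = (m + t * x) ^ 2 / (2 * t) := by
      field_simp; ring
    nlinarith [sq_nonneg (m + t * x), div_nonneg (sq_nonneg (m + t*x)) (le_of_lt (by linarith : (0:ℝ) < 2*t))]
  apply le_antisymm
  · exact ciSup_le key
  · have hb : BddAbove (Set.range fun x : ℝ => K - m * x - t/2 * x ^ 2) :=
      ⟨K + m ^ 2 / (2 * t), by rintro _ ⟨x, rfl⟩; exact key x⟩
    have := le_ciSup hb (-m / t)
    refine le_trans (le_of_eq ?_) this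
    field_simp; ring

/-- Second iterated derivative of a real quadratic form on `ℂ ≅ ℝ²`. -/
lemma quad_second_aux (A B C : ℝ) (z v : ℂ) :
    iteratedFDeriv ℝ 2 (fun z : ℂ => A*z.re^2 + B*(z.re*z.im) + C*z.im^2) z ![v, v]
      = 2*A*v.re^2 + 2*B*(v.re*v.im) + 2*C*v.im^2 := by
  set H1 : ℂ →L[ℝ] ℝ := (2*A) • Complex.reCLM + B • Complex.imCLM with hH1
  set H2 : ℂ →L[ℝ] ℝ := B • Complex.reCLM + (2*C) • Complex.imCLM with hH2
  set D : ℂ →L[ℝ] (ℂ →L[ℝ] ℝ) := Complex.reCLM.smulRight H1 + Complex.imCLM.smulRight H2 with hD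
  have hre : ∀ z : ℂ, HasFDerivAt (fun z:ℂ => z.re) Complex.reCLM z := fun z => Complex.reCLM.hasFDerivAt
  have him : ∀ z : ℂ, HasFDerivAt (fun z:ℂ => z.im) Complex.imCLM z := fun z => Complex.imCLM.hasFDerivAt
  have hdf : ∀ z : ℂ, HasFDerivAt (fun z : ℂ => A*z.re^2 + B*(z.re*z.im) + C*z.im^2) (D z) z := by
    intro z
    have h := ((((hre z).mul (hre z)).const_mul A).add (((hre z).mul (him z)).const_mul B)).add
      (((him z).mul (him z)).const_mul C)
    have hfun : (fun z : ℂ => A*z.re^2 + B*(z.re*z.im) + C*z.im^2)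
        = fun z : ℂ => A * (z.re * z.re) + B * (z.re * z.im) + C * (z.im * z.im) := by
      funext w; ring
    rw [hfun]
    refine h.congr_fderiv ?_
    ext w
    simp [hD, hH1, hH2, ContinuousLinearMap.smulRight_apply]
    ring
  have h1 : fderiv ℝ (fun z : ℂ => A*z.re^2 + B*(z.re*z.im) + C*z.im^2) = fun z => D z := by
    funext z; exact (hdf z).fderiv
  rw [iteratedFDeriv_two_apply, h1]
  have h2 : fderiv ℝ (fun z : ℂ => D z) z = D := D.fderiv
  rw [h2]
  simp [hD, hH1, hH2, ContinuousLinearMap.smulRight_apply]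
  ring

/-- For the phase `φ(z,x) = (a/2)z² + bzx + (c/2)x²` with `Im c > 0`
and `b ≠ 0`, the weight `Φ(z) = sup_{x∈ℝ}(−Im φ(z,x))` is given explicitly by
`Φ(z) = −Im((a/2)z²) + (Im(bz))²/(2 Im c)`; in particular `Φ` is a real quadratic form
on `ℂ ≅ ℝ²` which is strictly plurisubharmonic: its Laplacian (computed as the sum of
the second derivatives in the directions `1` and `i`) is the positive constant
`|b|²/Im c`. -/
theorem fbi_weight_strictly_plurisubharmonic
    (a b c : ℂ) (hc : 0 < c.im) (hb : b ≠ 0)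
    (φ : ℂ → ℂ → ℂ)
    (hφ : ∀ z x : ℂ, φ z x = a / 2 * z ^ 2 + b * z * x + c / 2 * x ^ 2)
    (Φ : ℂ → ℝ) (hΦ : ∀ z : ℂ, Φ z = ⨆ x : ℝ, -(φ z (x : ℂ)).im) :
    (∀ z : ℂ, Φ z = -(a / 2 * z ^ 2).im + ((b * z).im) ^ 2 / (2 * c.im)) ∧
    (∀ z : ℂ,
      iteratedFDeriv ℝ 2 Φ z ![1, 1] + iteratedFDeriv ℝ 2 Φ z ![Complex.I, Complex.I]
        = ‖b‖ ^ 2 / c.im) ∧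
    0 < ‖b‖ ^ 2 / c.im := by
  have hcim : (c / 2).im = c.im / 2 := by
    have h : c / 2 = ((2⁻¹:ℝ):ℂ) * c := by push_cast; ring
    rw [h, Complex.mul_im]; simp; ring
  have hmain : ∀ z : ℂ, Φ z = -(a / 2 * z ^ 2).im + ((b * z).im) ^ 2 / (2 * c.im) := by
    intro z
    rw [hΦ z]
    have hfx : ∀ x : ℝ, -(φ z (x:ℂ)).im
        = -(a / 2 * z ^ 2).im - (b * z).im * x - c.im/2 * x ^ 2 := by
      intro x
      rw [hφ]
      have h1 : (b * z * (x:ℂ)).im = (b*z).im * x := by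
        rw [Complex.mul_im]; simp
      have h2 : (c / 2 * (x:ℂ)^2).im = c.im / 2 * x ^ 2 := by
        have hx : c / 2 * (x:ℂ)^2 = ((x^2 : ℝ):ℂ) * (c / 2) := by push_cast; ring
        rw [hx, Complex.mul_im, hcim]; simp only [Complex.ofReal_re, Complex.ofReal_im]; ring
      rw [Complex.add_im, Complex.add_im, h1, h2]
      ring
    simp only [hfx]
    exact sup_quad_aux _ _ _ hc
  refine ⟨hmain, ?_, ?_⟩
  · intro z
    set A : ℝ := -a.im/2 + b.im^2/(2*c.im) with hA
    set B : ℝ := -a.re + b.re*b.im/c.im with hB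
    set C : ℝ := a.im/2 + b.re^2/(2*c.im) with hC
    have hΦeq : Φ = fun w : ℂ => A*w.re^2 + B*(w.re*w.im) + C*w.im^2 := by
      funext w
      rw [hmain w]
      have hiw : (w^2).im = 2*w.re*w.im := by rw [pow_two, Complex.mul_im]; ring
      have hrw : (w^2).re = w.re^2 - w.im^2 := by rw [pow_two, Complex.mul_re]; ring
      have hs : a/2*w^2 = ((2⁻¹:ℝ):ℂ) * (a*w^2) := by push_cast; ring
      rw [hs, Complex.mul_im, Complex.mul_im, Complex.mul_im, hiw, hrw, hA, hB, hC]
      simp only [Complex.ofReal_re, Complex.ofReal_im]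
      field_simp
      ring
    rw [hΦeq, quad_second_aux, quad_second_aux]
    simp only [Complex.one_re, Complex.one_im, Complex.I_re, Complex.I_im]
    rw [Complex.sq_norm, Complex.normSq_apply, hA, hC]
    field_simp
    ring
  · have hb' : 0 < ‖b‖ := norm_pos_iff.mpr hb
    positivity
end

section
/- The Grushin operator 𝒮 is a bijection of H × ℂ, and its inverse sends (v, v₊) ∈ H × ℂ to (u, u₋) where u = v₊ e_k + Σ_{l≠k} (λ_l − z)^{−1} ⟨e_l, v⟩ e_l (the series converging in H) and u₋ = ⟨e_k, v⟩ + (z − λ_k) v₊. In particular the effective Hamiltonian, i.e. the lower-right entry of the inverse, is E₋₊(z) = z − λ_k. -/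
set_option maxHeartbeats 1000000


/-- With `S` diagonal in the Hilbert basis `(e_k)_{k∈ℤ}`
(`S e_k = λ_k e_k`, `λ` bounded), `k ∈ ℤ`, `z ∈ ℂ`, and `δ > 0` with
`|z − λ_l| ≥ δ` for all `l ≠ k`, the Grushin operator
`𝒮(u, u₋) = ((S − z)u + u₋ e_k, ⟨e_k, u⟩)` is a bijection of `H × ℂ`, whose inverse
sends `(v, vplus)` to `(u, u₋)` with `u = vplus e_k + Σ_{l≠k} (λ_l − z)⁻¹ ⟨e_l, v⟩ e_l`
(the series converging in `H`) and `u₋ = ⟨e_k, v⟩ + (z − λ_k) vplus`; in particular the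
effective Hamiltonian is `E₋₊(z) = z − λ_k`. -/
theorem grushin_problem_bijective
    {H : Type*} [NormedAddCommGroup H] [InnerProductSpace ℂ H] [CompleteSpace H]
    (e : HilbertBasis ℤ ℂ H) (lam : ℤ → ℂ)
    (hbdd : ∃ M : ℝ, ∀ k : ℤ, ‖lam k‖ ≤ M)
    (S : H →L[ℂ] H) (hS : ∀ k : ℤ, S (e k) = lam k • e k)
    (k : ℤ) (z : ℂ) (δ : ℝ) (hδ : 0 < δ)
    (hgap : ∀ l : ℤ, l ≠ k → δ ≤ ‖z - lam l‖)
    (𝒮 : H × ℂ → H × ℂ)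
    (h𝒮 : ∀ p : H × ℂ,
      𝒮 p = (S p.1 - z • p.1 + p.2 • e k, (inner ℂ (e k) p.1 : ℂ))) :
    Function.Bijective 𝒮 ∧
    ∀ (v : H) (vplus : ℂ), ∃ s : H,
      HasSum (fun l : {l : ℤ // l ≠ k} =>
        ((lam l.1 - z)⁻¹ * (inner ℂ (e l.1) v : ℂ)) • e l.1) s ∧
      𝒮 (vplus • e k + s, (inner ℂ (e k) v : ℂ) + (z - lam k) * vplus) = (v, vplus) := by
  have horth : ∀ i j : ℤ, (inner ℂ (e i) (e j) : ℂ) = if i = j then 1 else 0 :=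
    orthonormal_iff_ite.mp e.orthonormal
  -- `S` acts diagonally on inner products
  have hSx : ∀ (x : H) (l : ℤ), (inner ℂ (e l) (S x) : ℂ) = lam l * inner ℂ (e l) x := by
    intro x l
    have h1 := (e.hasSum_repr x).mapL S
    have h2 : HasSum (fun i : ℤ => e.repr x i • (lam i • e i)) (S x) := by
      simpa [hS] using h1
    have h3 := h2.mapL (innerSL ℂ (e l))
    have h4 : HasSum (fun i : ℤ => if i = l then lam l * e.repr x l else 0)
        (inner ℂ (e l) (S x)) := by
      convert h3 using 2 with i
      case e'_3 => rfl
      case e'_6 => rfl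
      simp only [innerSL_apply_apply, inner_smul_right, horth l i]
      by_cases h : i = l
      · subst h; simp; ring
      · simp [h, Ne.symm h]
    have h5 := h4.unique (hasSum_ite_eq l (lam l * e.repr x l))
    rw [h5, e.repr_apply_apply]
  -- extensionality via the basis
  have hext : ∀ x y : H, (∀ l : ℤ, (inner ℂ (e l) x : ℂ) = inner ℂ (e l) y) → x = y := by
    intro x y h
    apply e.repr.injective
    apply lp.ext
    funext l
    simpa [e.repr_apply_apply] using h l
  have lamne : ∀ l : ℤ, l ≠ k → lam l - z ≠ 0 := by
    intro l hl h0
    have := hgap l hl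
    have : z - lam l = 0 := by
      have : lam l = z := by linear_combination h0
      simp [this]
    simp [this] at hgap
    exact absurd (hgap l hl) (by simpa [this] using not_le.mpr hδ)
  -- the key construction
  have key : ∀ (v : H) (vplus : ℂ), ∃ s : H,
      HasSum (fun l : {l : ℤ // l ≠ k} =>
        ((lam l.1 - z)⁻¹ * (inner ℂ (e l.1) v : ℂ)) • e l.1) s ∧
      𝒮 (vplus • e k + s, (inner ℂ (e k) v : ℂ) + (z - lam k) * vplus) = (v, vplus) := by
    intro v vplus
    set f : ℤ → ℂ := fun l => if l = k then 0 else (lam l - z)⁻¹ * inner ℂ (e l) v with hf_def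
    have hf : Memℓp f 2 := by
      apply memℓp_gen
      have ht : (2 : ENNReal).toReal = ((2 : ℕ) : ℝ) := by norm_num
      have hv : Summable fun i : ℤ => ‖e.repr v i‖ ^ (2 : ENNReal).toReal :=
        (memℓp_gen_iff (by norm_num)).mp (lp.memℓp (e.repr v))
      simp only [ht, Real.rpow_natCast] at hv ⊢
      have hbound : ∀ i : ℤ, ‖f i‖ ^ 2 ≤ δ⁻¹ ^ 2 * ‖e.repr v i‖ ^ 2 := by
        intro i
        rw [← mul_pow]
        apply pow_le_pow_left₀ (norm_nonneg _)
        by_cases h : i = k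
        · simp only [hf_def, h, if_true, norm_zero]
          positivity
        · simp only [hf_def, h, if_false, norm_mul, norm_inv]
          rw [e.repr_apply_apply]
          have habs : δ ≤ ‖lam i - z‖ := by
            have := hgap i h
            calc δ ≤ ‖z - lam i‖ := this
              _ = ‖lam i - z‖ := by rw [norm_sub_rev]
          have hpos : (0:ℝ) < ‖lam i - z‖ := lt_of_lt_of_le hδ habs
          apply mul_le_mul_of_nonneg_right _ (norm_nonneg _)
          rw [inv_le_inv₀ hpos hδ]
          exact habs
      exact Summable.of_nonneg_of_le (fun i => by positivity) hbound (hv.mul_left _)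
    set s : H := e.repr.symm ⟨f, hf⟩ with hs_def
    have hs : HasSum (fun i : ℤ => f i • e i) s := by
      simpa using e.hasSum_repr_symm ⟨f, hf⟩
    have hrs : ∀ l : ℤ, (inner ℂ (e l) s : ℂ) = f l := by
      intro l
      rw [← e.repr_apply_apply, hs_def, LinearIsometryEquiv.apply_symm_apply]
    refine ⟨s, ?_, ?_⟩
    · have hsup : Function.support (fun i : ℤ => f i • e i) ⊆ {l : ℤ | l ≠ k} := by
        intro i hi
        simp only [Function.mem_support] at hi
        intro hik
        apply hi
        simp [hf_def, hik]
      have h := (hasSum_subtype_iff_of_support_subset hsup).2 hs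
      have heq : (fun l : {l : ℤ // l ≠ k} =>
          ((lam l.1 - z)⁻¹ * (inner ℂ (e l.1) v : ℂ)) • e l.1) =
          (fun i : ℤ => f i • e i) ∘ ((↑) : {l : ℤ // l ≠ k} → ℤ) := by
        funext l
        simp [hf_def, l.2]
      rw [heq]
      exact h
    · set u : H := vplus • e k + s with hu_def
      have hu : ∀ l : ℤ, (inner ℂ (e l) u : ℂ) = (if l = k then vplus else 0) + f l := by
        intro l
        rw [hu_def, inner_add_right, inner_smul_right, horth l k, hrs l]
        by_cases h : l = k <;> simp [h]
      rw [h𝒮]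
      dsimp only
      refine Prod.ext ?_ ?_
      · apply hext
        intro l
        rw [inner_add_right, inner_sub_right, inner_smul_right, inner_smul_right,
          hSx u l, horth l k, hu l]
        by_cases h : l = k
        · subst h
          simp [hf_def]
          ring
        · simp only [h, if_false, zero_add, mul_zero, add_zero]
          have hne := lamne l h
          simp [hf_def, h]
          field_simp
      · simp only
        rw [hu k]
        simp [hf_def]
    -- end key
  refine ⟨⟨?_, ?_⟩, key⟩
  · -- injective
    intro p q h
    rw [h𝒮 p, h𝒮 q] at h
    have h1 : S p.1 - z • p.1 + p.2 • e k = S q.1 - z • q.1 + q.2 • e k :=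
      congrArg Prod.fst h
    have h2 : (inner ℂ (e k) p.1 : ℂ) = inner ℂ (e k) q.1 := congrArg Prod.snd h
    have hc : ∀ l : ℤ, lam l * inner ℂ (e l) p.1 - z * inner ℂ (e l) p.1
        + p.2 * (if l = k then 1 else 0)
        = lam l * inner ℂ (e l) q.1 - z * inner ℂ (e l) q.1
        + q.2 * (if l = k then 1 else 0) := by
      intro l
      have := congrArg (fun x : H => (inner ℂ (e l) x : ℂ)) h1
      simpa [inner_add_right, inner_sub_right, inner_smul_right, hSx, horth l k]
        using this
    have hp2 : p.2 = q.2 := by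
      have := hc k
      simp [h2] at this
      exact this
    have hinner : ∀ l : ℤ, (inner ℂ (e l) p.1 : ℂ) = inner ℂ (e l) q.1 := by
      intro l
      by_cases h : l = k
      · subst h; exact h2
      · have := hc l
        simp only [h, if_false, mul_zero, add_zero] at this
        have h3 : (lam l - z) * (inner ℂ (e l) p.1 : ℂ) = (lam l - z) * inner ℂ (e l) q.1 := by
          linear_combination this
        exact mul_left_cancel₀ (lamne l h) h3
    have hp1 : p.1 = q.1 := hext _ _ hinner
    exact Prod.ext hp1 hp2
  · -- surjective
    intro p
    obtain ⟨s, _, heq⟩ := key p.1 p.2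
    exact ⟨_, heq⟩
end

section
/- Assume in addition that 0 < ħ ≤ 1, δ ≥ ħ/C₀ and |z − λ_k| ≤ C₁ħ for some constants C₀, C₁ > 0. Then there is a constant C > 0 depending only on C₀ and C₁ such that whenever 𝒮(u, u₋) = (v, v₊) with (u, u₋), (v, v₊) ∈ H × ℂ, one has the a priori estimate ħ‖u‖ + |u₋| ≤ C(‖v‖ + ħ|v₊|). -/
/-- A priori estimate for the Grushin problem: for all constants
`C₀, C₁ > 0` there is a constant `C > 0` (depending only on `C₀` and `C₁`) such that
for any complex Hilbert space `H` with Hilbert basis `(e_k)_{k∈ℤ}`, any bounded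
`λ : ℤ → ℂ`, any bounded operator `S` with `S e_k = λ_k e_k`, any `k ∈ ℤ`, `z ∈ ℂ`,
`δ > 0` with `|z − λ_l| ≥ δ` for `l ≠ k`, and any `0 < ħ ≤ 1` with `δ ≥ ħ/C₀` and
`|z − λ_k| ≤ C₁ħ`: whenever `𝒮(u, u₋) = (v, v₊)` (i.e. `(S − z)u + u₋ e_k = v` and
`⟨e_k, u⟩ = v₊`), one has `ħ‖u‖ + |u₋| ≤ C(‖v‖ + ħ|v₊|)`. -/
theorem grushin_problem_apriori_estimate
    (C₀ C₁ : ℝ) (hC₀ : 0 < C₀) (hC₁ : 0 < C₁) :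
    ∃ C : ℝ, 0 < C ∧
      ∀ (H : Type) (_ : NormedAddCommGroup H), ∀ (_ : InnerProductSpace ℂ H)
        (_ : CompleteSpace H)
        (e : HilbertBasis ℤ ℂ H) (lam : ℤ → ℂ),
        (∃ M : ℝ, ∀ k : ℤ, ‖lam k‖ ≤ M) →
        ∀ (S : H →L[ℂ] H), (∀ k : ℤ, S (e k) = lam k • e k) →
        ∀ (k : ℤ) (z : ℂ) (δ ℏ : ℝ),
          0 < δ → (∀ l : ℤ, l ≠ k → δ ≤ ‖z - lam l‖) →
          0 < ℏ → ℏ ≤ 1 → ℏ / C₀ ≤ δ → ‖z - lam k‖ ≤ C₁ * ℏ →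
          ∀ (u v : H) (uminus vplus : ℂ),
            S u - z • u + uminus • e k = v → (inner ℂ (e k) u : ℂ) = vplus →
            ℏ * ‖u‖ + ‖uminus‖ ≤ C * (‖v‖ + ℏ * ‖vplus‖) := by
  classical
  refine ⟨C₀ + C₁ + 1, by linarith, ?_⟩
  intro H _ _ _ e lam _ S hS k z δ ℏ hδ hgap hℏ hℏ1 hℏδ hzk u v uminus vplus heq hv
  -- diagonal action of S in coordinates
  have hdiag : ∀ l : ℤ, (inner ℂ (e l) (S u) : ℂ) = lam l * inner ℂ (e l) u := by
    intro l
    have h1 : HasSum (fun i : ℤ => (innerSL ℂ (e l)) (S (e.repr u i • e i)))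
        ((innerSL ℂ (e l)) (S u)) := ((e.hasSum_repr u).mapL S).mapL (innerSL ℂ (e l))
    have h2 : (fun i : ℤ => (innerSL ℂ (e l)) (S (e.repr u i • e i)))
        = fun i => if i = l then lam l * inner ℂ (e l) u else 0 := by
      funext i
      rw [map_smul, hS i]
      simp only [innerSL_apply_apply, inner_smul_right, smul_eq_mul]
      rw [orthonormal_iff_ite.mp e.orthonormal l i]
      by_cases h : i = l
      · subst h
        simp [e.repr_apply_apply]
        ring
      · simp [h, Ne.symm h]
    rw [h2] at h1
    have h3 : HasSum (fun i : ℤ => if i = l then lam l * (inner ℂ (e l) u : ℂ) else 0)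
        (lam l * inner ℂ (e l) u) := hasSum_ite_eq l _
    have := h1.unique h3
    simpa [innerSL_apply_apply] using this
  -- coefficient identity
  have hcoeff : ∀ l : ℤ, (inner ℂ (e l) v : ℂ)
      = (lam l - z) * inner ℂ (e l) u + uminus * (if l = k then 1 else 0) := by
    intro l
    rw [← heq, inner_add_right, inner_sub_right, inner_smul_right, inner_smul_right,
      hdiag l, orthonormal_iff_ite.mp e.orthonormal l k]
    ring
  have hek : ‖e k‖ = 1 := e.orthonormal.1 k
  have hbk : ‖(inner ℂ (e k) v : ℂ)‖ ≤ ‖v‖ := by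
    have := norm_inner_le_norm (𝕜 := ℂ) (e k) v
    rwa [hek, one_mul] at this
  -- bound on uminus
  have huminus : ‖uminus‖ ≤ ‖v‖ + C₁ * ℏ * ‖vplus‖ := by
    have hk' := hcoeff k
    rw [if_pos rfl, mul_one, hv] at hk'
    have : uminus = (inner ℂ (e k) v : ℂ) - (lam k - z) * vplus := by
      rw [hk']; ring
    rw [this]
    calc ‖(inner ℂ (e k) v : ℂ) - (lam k - z) * vplus‖
        ≤ ‖(inner ℂ (e k) v : ℂ)‖ + ‖(lam k - z) * vplus‖ :=
          norm_sub_le _ _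
      _ ≤ ‖v‖ + C₁ * ℏ * ‖vplus‖ := by
          rw [norm_mul]
          have h1 : ‖lam k - z‖ ≤ C₁ * ℏ := by
            rwa [norm_sub_rev] at hzk
          have := mul_le_mul_of_nonneg_right h1 (norm_nonneg vplus)
          linarith
  -- bound on the off-diagonal part of u
  set w : H := u - vplus • e k with hw_def
  have hwcoeff : ∀ l : ℤ, ‖e.repr w l‖ ≤ ‖e.repr v l‖ * (1 / δ) := by
    intro l
    rw [e.repr_apply_apply, e.repr_apply_apply, hw_def, inner_sub_right, inner_smul_right,
      orthonormal_iff_ite.mp e.orthonormal l k]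
    by_cases h : l = k
    · subst h
      simp [hv]
      positivity
    · rw [if_neg h, mul_zero, sub_zero]
      have hc := hcoeff l
      rw [if_neg h, mul_zero, add_zero] at hc
      have hδl : δ ≤ ‖lam l - z‖ := by
        rw [norm_sub_rev]; exact hgap l h
      have habs : ‖(inner ℂ (e l) v : ℂ)‖
          = ‖lam l - z‖ * ‖(inner ℂ (e l) u : ℂ)‖ := by
        rw [hc, norm_mul]
      rw [habs]
      rw [mul_one_div, le_div_iff₀ hδ]
      have := mul_le_mul_of_nonneg_left hδl (norm_nonneg (inner ℂ (e l) u : ℂ))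
      nlinarith [norm_nonneg (inner ℂ (e l) u : ℂ)]
  have h2pos : (0:ℝ) < (2:ENNReal).toReal := by norm_num
  have hwnorm : ‖w‖ ≤ ‖v‖ / δ := by
    rw [← e.repr.norm_map w]
    refine lp.norm_le_of_tsum_le h2pos (by positivity) ?_
    have hpt : ∀ l : ℤ, ‖e.repr w l‖ ^ (2:ENNReal).toReal
        ≤ ‖e.repr v l‖ ^ (2:ENNReal).toReal * (1/δ) ^ (2:ENNReal).toReal := by
      intro l
      rw [← Real.mul_rpow (norm_nonneg _) (by positivity)]
      exact Real.rpow_le_rpow (norm_nonneg _) (hwcoeff l) (le_of_lt h2pos)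
    calc (∑' l : ℤ, ‖e.repr w l‖ ^ (2:ENNReal).toReal)
        ≤ ∑' l : ℤ, ‖e.repr v l‖ ^ (2:ENNReal).toReal * (1/δ) ^ (2:ENNReal).toReal :=
          Summable.tsum_le_tsum hpt ((lp.memℓp _).summable h2pos)
            (((lp.memℓp _).summable h2pos).mul_right _)
      _ = (∑' l : ℤ, ‖e.repr v l‖ ^ (2:ENNReal).toReal) * (1/δ) ^ (2:ENNReal).toReal :=
          tsum_mul_right
      _ = ‖e.repr v‖ ^ (2:ENNReal).toReal * (1/δ) ^ (2:ENNReal).toReal := by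
          rw [← lp.norm_rpow_eq_tsum h2pos]
      _ = (‖v‖ / δ) ^ (2:ENNReal).toReal := by
          rw [← Real.mul_rpow (norm_nonneg _) (by positivity), e.repr.norm_map,
            mul_one_div]
  -- assemble
  have hu : ‖u‖ ≤ ‖v‖ / δ + ‖vplus‖ := by
    have : u = w + vplus • e k := by rw [hw_def]; abel
    rw [this]
    calc ‖w + vplus • e k‖ ≤ ‖w‖ + ‖vplus • e k‖ := norm_add_le _ _
      _ ≤ ‖v‖ / δ + ‖vplus‖ := by
          rw [norm_smul, hek, mul_one]
          linarith
  have hℏδ' : ℏ / δ ≤ C₀ := by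
    rw [div_le_iff₀ hδ]
    rw [div_le_iff₀ hC₀] at hℏδ
    linarith
  have key : ℏ * ‖u‖ ≤ C₀ * ‖v‖ + ℏ * ‖vplus‖ := by
    have h1 : ℏ * ‖u‖ ≤ ℏ * (‖v‖ / δ + ‖vplus‖) :=
      mul_le_mul_of_nonneg_left hu (le_of_lt hℏ)
    have h2 : ℏ * (‖v‖ / δ) ≤ C₀ * ‖v‖ := by
      rw [mul_div_assoc'] at *
      calc ℏ * ‖v‖ / δ = (ℏ / δ) * ‖v‖ := by ring
        _ ≤ C₀ * ‖v‖ := mul_le_mul_of_nonneg_right hℏδ' (norm_nonneg _)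
    nlinarith
  have hvn : (0:ℝ) ≤ ‖v‖ := norm_nonneg _
  have hvp : (0:ℝ) ≤ ‖vplus‖ := norm_nonneg _
  have hp1 : 0 ≤ C₀ * ‖v‖ := mul_nonneg hC₀.le hvn
  have hp2 : 0 ≤ C₁ * ‖v‖ := mul_nonneg hC₁.le hvn
  have hp3 : 0 ≤ C₀ * (ℏ * ‖vplus‖) := mul_nonneg hC₀.le (mul_nonneg hℏ.le hvp)
  nlinarith
end
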